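/- arXiv:2211.14721 — 5 statements merged into one kernel-verified Lean document; each statement's English description precedes it below -/
import Mathlib

section
/- For positive integers L, d with L + d > 5, the function O(x, y) = (x/y - 1)² + (x²/(y² L)) (d + 1 + (1 - 6x)/x), minimized over x ∈ (0, 1/4] and y > 0, attains its minimum at x* = 1/4 and y* = (L + d - 1)/(4L). -/
/-- For positive integers `L, d` with `L + d > 5`, the function
`O(x,y) = (x/y - 1)² + (x²/(y²L))(d + 1 + (1-6x)/x)`, minimized over
`x ∈ (0, 1/4]` and `y > 0`, attains its minimum at `x* = 1/4` and
`y* = (L+d-1)/(4L)`. -/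
theorem stmt_4 (L d : ℕ) (hL : 0 < L) (hd : 0 < d) (h : 5 < L + d) :
    let O : ℝ → ℝ → ℝ := fun x y =>
      (x / y - 1) ^ 2 + (x ^ 2 / (y ^ 2 * L)) * ((d : ℝ) + 1 + (1 - 6 * x) / x)
    let xstar : ℝ := 1 / 4
    let ystar : ℝ := ((L : ℝ) + d - 1) / (4 * L)
    (0 < xstar ∧ xstar ≤ 1 / 4) ∧ 0 < ystar ∧
      ∀ x y : ℝ, 0 < x → x ≤ 1 / 4 → 0 < y → O xstar ystar ≤ O x y := by
  intro O xstar ystar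
  have hA : (1:ℝ) ≤ (L:ℝ) := by exact_mod_cast hL
  have hD : (1:ℝ) ≤ (d:ℝ) := by exact_mod_cast hd
  have hA0 : (0:ℝ) < (L:ℝ) := by linarith
  have hM : (0:ℝ) < (L:ℝ) + d - 1 := by linarith
  have hAne : (L:ℝ) ≠ 0 := ne_of_gt hA0
  have hMne : ((L:ℝ) + d - 1) ≠ 0 := ne_of_gt hM
  refine ⟨⟨by norm_num, le_refl _⟩, by positivity, ?_⟩
  intro x y hx hx4 hy
  have hxne : x ≠ 0 := ne_of_gt hx
  have hyne : y ≠ 0 := ne_of_gt hy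
  set A : ℝ := (L:ℝ)
  set D : ℝ := (d:ℝ)
  set M : ℝ := A + D - 1
  -- rewrite O x y
  have h1 : O x y = (x/y - 1)^2 + (x/y)^2*(D+1)/A + (x/y)^2*(1/x - 6)/A := by
    simp only [O]
    field_simp
    ring
  have h2 : O xstar ystar = (A/M - 1)^2 + (A/M)^2*(D-1)/A := by
    simp only [O, xstar, ystar, M, A, D]
    have hMne' : (L:ℝ) + (d:ℝ) - 1 ≠ 0 := hMne
    have hAne' : (L:ℝ) ≠ 0 := hAne
    field_simp
    ring
  rw [h1, h2]
  have hs : 0 < x / y := div_pos hx hy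
  set s : ℝ := x / y with hsdef
  have hinv : (4:ℝ) ≤ 1/x := by
    rw [le_div_iff₀ hx]; linarith
  have hre : s^2*(1/x - 6)/A + 2*s^2/A = s^2*(1/x - 4)/A := by ring
  have hnn : 0 ≤ s^2*(1/x - 4)/A := by
    have : 0 ≤ 1/x - 4 := by linarith
    positivity
  have step1 : -(2*s^2/A) ≤ s^2*(1/x - 6)/A := by linarith
  have key : (s-1)^2 + s^2*(D-1)/A - ((A/M-1)^2 + (A/M)^2*(D-1)/A)
      = (M/A)*(s - A/M)^2 := by
    field_simp
    ring
  have step2 : (A/M-1)^2 + (A/M)^2*(D-1)/A ≤ (s-1)^2 + s^2*(D-1)/A := by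
    nlinarith [mul_nonneg (le_of_lt (div_pos hM hA0)) (sq_nonneg (s - A/M))]
  have hsplit : s^2*(D+1)/A = s^2*(D-1)/A + 2*s^2/A := by ring
  linarith
end

section
/- Let L, d, N be positive integers and a, b ≥ 0. Define MSE(σ², k) = (σ²-1)² a + (σ⁴/L)(d+k-2) a + (σ⁴/(LN))(d+k-1) b. Then with σ*² = L/(L+d+1), MSE(σ*², 3) ≤ MSE(1, 3), with strict inequality if a + b > 0 and d ≥ 1. -/
/-- With `MSE(σ²,k) = (σ²-1)² a + (σ⁴/L)(d+k-2) a + (σ⁴/(LN))(d+k-1) b`, setting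
`σ*² = L/(L+d+1)` gives `MSE(σ*²,3) ≤ MSE(1,3)`, strictly if `a + b > 0`. -/
theorem stmt_8 (L d N : ℕ) (hL : 0 < L) (hd : 1 ≤ d) (hN : 0 < N)
    (a b : ℝ) (ha : 0 ≤ a) (hb : 0 ≤ b) :
    let MSE : ℝ → ℝ → ℝ := fun s k =>
      (s - 1) ^ 2 * a + (s ^ 2 / L) * ((d : ℝ) + k - 2) * a
        + (s ^ 2 / (L * N)) * ((d : ℝ) + k - 1) * b
    let sstar : ℝ := (L : ℝ) / ((L : ℝ) + d + 1)
    MSE sstar 3 ≤ MSE 1 3 ∧ (0 < a + b → MSE sstar 3 < MSE 1 3) := by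
  intro MSE sstar
  have hL' : (0:ℝ) < L := by exact_mod_cast hL
  have hN' : (0:ℝ) < N := by exact_mod_cast hN
  have hc : (0:ℝ) < (L:ℝ) + d + 1 := by positivity
  have key : MSE 1 3 - MSE sstar 3 =
      ((d:ℝ) + 1) ^ 2 * a / ((L:ℝ) * ((L:ℝ) + d + 1))
        + ((d:ℝ) + 2) * ((d:ℝ) + 1) * (2 * (L:ℝ) + d + 1) * b
            / ((L:ℝ) * N * ((L:ℝ) + d + 1) ^ 2) := by
    simp only [MSE, sstar]
    field_simp
    ring
  clear_value MSE sstar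
  constructor
  · have h1 : (0:ℝ) ≤ ((d:ℝ) + 1) ^ 2 * a / ((L:ℝ) * ((L:ℝ) + d + 1)) := by positivity
    have h2 : (0:ℝ) ≤ ((d:ℝ) + 2) * ((d:ℝ) + 1) * (2 * (L:ℝ) + d + 1) * b
        / ((L:ℝ) * N * ((L:ℝ) + d + 1) ^ 2) := by positivity
    linarith
  · intro hab
    have h1 : (0:ℝ) ≤ ((d:ℝ) + 1) ^ 2 * a / ((L:ℝ) * ((L:ℝ) + d + 1)) := by positivity
    have h2 : (0:ℝ) ≤ ((d:ℝ) + 2) * ((d:ℝ) + 1) * (2 * (L:ℝ) + d + 1) * b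
        / ((L:ℝ) * N * ((L:ℝ) + d + 1) ^ 2) := by positivity
    rcases lt_or_eq_of_le ha with haa | haa
    · have h1' : (0:ℝ) < ((d:ℝ) + 1) ^ 2 * a / ((L:ℝ) * ((L:ℝ) + d + 1)) := by positivity
      linarith
    · have hbb : 0 < b := by linarith
      have h2' : (0:ℝ) < ((d:ℝ) + 2) * ((d:ℝ) + 1) * (2 * (L:ℝ) + d + 1) * b
          / ((L:ℝ) * N * ((L:ℝ) + d + 1) ^ 2) := by positivity
      linarith
end

section
/- Let L, d, N be positive integers with L + d > 5 and a, b ≥ 0. With MSE(σ², k) as below, let m* = sqrt((L+d-1)/(4L)) and σ*² = 1/(4 m*²) = L/(L+d-1). Then MSE(σ*², 1) ≤ MSE(1, 1), with strict inequality if a + b > 0 and d ≥ 2. -/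
/-- With `MSE(σ²,k) = (σ²-1)² a + (σ⁴/L)(d+k-2) a + (σ⁴/(LN))(d+k-1) b`, for
`L + d > 5`, setting `m* = √((L+d-1)/(4L))` and `σ*² = 1/(4m*²) = L/(L+d-1)`
gives `MSE(σ*²,1) ≤ MSE(1,1)`, strictly if `a + b > 0` and `d ≥ 2`. -/
theorem stmt_9 (L d N : ℕ) (hL : 0 < L) (hd : 0 < d) (hN : 0 < N) (h : 5 < L + d)
    (a b : ℝ) (ha : 0 ≤ a) (hb : 0 ≤ b) :
    let MSE : ℝ → ℝ → ℝ := fun s k =>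
      (s - 1) ^ 2 * a + (s ^ 2 / L) * ((d : ℝ) + k - 2) * a
        + (s ^ 2 / (L * N)) * ((d : ℝ) + k - 1) * b
    let mstar : ℝ := Real.sqrt (((L : ℝ) + d - 1) / (4 * L))
    let sstar : ℝ := 1 / (4 * mstar ^ 2)
    sstar = (L : ℝ) / ((L : ℝ) + d - 1) ∧ MSE sstar 1 ≤ MSE 1 1 ∧
      (0 < a + b → 2 ≤ d → MSE sstar 1 < MSE 1 1) := by
  intro MSE mstar sstar
  have hL1 : (1:ℝ) ≤ L := by exact_mod_cast hL
  have hd1 : (1:ℝ) ≤ d := by exact_mod_cast hd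
  have hN1 : (1:ℝ) ≤ N := by exact_mod_cast hN
  have hL0 : (0:ℝ) < L := by linarith
  have hN0 : (0:ℝ) < N := by linarith
  set c : ℝ := (L:ℝ) + d - 1 with hcdef
  have hc : (0:ℝ) < c := by simp only [hcdef]; linarith
  have hLc : (L:ℝ) ≤ c := by simp only [hcdef]; linarith
  have hm2 : mstar ^ 2 = c / (4 * L) := by
    simp only [mstar]
    rw [Real.sq_sqrt]
    positivity
  have hs : sstar = (L:ℝ) / c := by
    simp only [sstar, hm2]
    field_simp
  clear_value mstar sstar
  clear_value c
  have hdiff : MSE 1 1 - MSE sstar 1 =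
      ((d:ℝ) - 1) * a * (c - L) / (L * c)
        + (d:ℝ) * b * (c - L) * (c + L) / (L * N * c ^ 2) := by
    have hc' : (L:ℝ) + d - 1 ≠ 0 := by linarith
    simp only [MSE, hs, hcdef]
    field_simp
    ring
  have h1 : 0 ≤ ((d:ℝ) - 1) * a * (c - L) / (L * c) := by
    apply div_nonneg _ (by positivity)
    have : (0:ℝ) ≤ c - L := by linarith
    have : (0:ℝ) ≤ (d:ℝ) - 1 := by linarith
    positivity
  have h2 : 0 ≤ (d:ℝ) * b * (c - L) * (c + L) / (L * N * c ^ 2) := by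
    apply div_nonneg _ (by positivity)
    have : (0:ℝ) ≤ c - L := by linarith
    positivity
  refine ⟨hs, sub_nonneg.mp (hdiff ▸ add_nonneg h1 h2), ?_⟩
  intro hab hd2
  have hd2' : (2:ℝ) ≤ d := by exact_mod_cast hd2
  have hcL : (0:ℝ) < c - L := by simp only [hcdef]; linarith
  rcases lt_or_ge 0 a with hA | hA
  · have h1' : 0 < ((d:ℝ) - 1) * a * (c - L) / (L * c) := by
      apply div_pos _ (by positivity)
      have : (0:ℝ) < (d:ℝ) - 1 := by linarith
      positivity
    exact sub_pos.mp (hdiff ▸ by linarith)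
  · have hB : 0 < b := by nlinarith
    have h2' : 0 < (d:ℝ) * b * (c - L) * (c + L) / (L * N * c ^ 2) := by
      apply div_pos _ (by positivity)
      have : (0:ℝ) < (d:ℝ) := by linarith
      positivity
    exact sub_pos.mp (hdiff ▸ by linarith)
end

section
/- If L² - 2L + 2 < (d+1)² and b > 0, then the asymptotic MSE of GS-shrinkage is strictly smaller than that of BeS-shrinkage when a = 0; conversely, if a > (d+1)² b / (N (L+d-1)(L+d+1)) (in particular if a is sufficiently large relative to b/N), the MSE of BeS-shrinkage is strictly smaller. -/
private lemma aux1 (x y n b : ℝ) (hx : 1 ≤ x) (hy : 1 ≤ y) (hn : 1 ≤ n)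
    (hlt : x ^ 2 - 2 * x + 2 < (y + 1) ^ 2) (hb : 0 < b) :
    x * (y + 2) / (n * (x + y + 1) ^ 2) * b < y * x / (n * (x + y - 1) ^ 2) * b := by
  have h1 : (0:ℝ) < x + y + 1 := by linarith
  have h2 : (0:ℝ) < x + y - 1 := by linarith
  have hn0 : (0:ℝ) < n := by linarith
  rw [div_mul_eq_mul_div, div_mul_eq_mul_div, div_lt_div_iff₀ (by positivity) (by positivity)]
  have key : (0:ℝ) < n * b * (2 * x * ((y + 1) ^ 2 - (x ^ 2 - 2 * x + 2))) := by
    have : (0:ℝ) < (y + 1) ^ 2 - (x ^ 2 - 2 * x + 2) := by linarith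
    positivity
  nlinarith [key]

private lemma aux2 (x y n a b : ℝ) (hx : 1 ≤ x) (hy : 1 ≤ y) (hn : 1 ≤ n)
    (hb : 0 ≤ b)
    (hgt : (y + 1) ^ 2 * b / (n * (x + y - 1) * (x + y + 1)) < a) :
    ((y - 1) ^ 2 + x * (y - 1)) / (x + y - 1) ^ 2 * a
      + y * x / (n * (x + y - 1) ^ 2) * b
      < ((y + 1) ^ 2 + x * (y + 1)) / (x + y + 1) ^ 2 * a
      + x * (y + 2) / (n * (x + y + 1) ^ 2) * b := by
  have h1 : (0:ℝ) < x + y + 1 := by linarith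
  have h2 : (0:ℝ) < x + y - 1 := by linarith
  have hn0 : (0:ℝ) < n := by linarith
  rw [div_lt_iff₀ (by positivity)] at hgt
  rw [div_mul_eq_mul_div, div_mul_eq_mul_div, div_mul_eq_mul_div, div_mul_eq_mul_div,
    div_add_div _ _ (by positivity) (by positivity),
    div_add_div _ _ (by positivity) (by positivity),
    div_lt_div_iff₀ (by positivity) (by positivity)]
  have hq : (0:ℝ) ≤ (x ^ 2 - 2 * x + 2) * b := by
    have : (0:ℝ) ≤ x ^ 2 - 2 * x + 2 := by nlinarith [sq_nonneg (x - 1)]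
    exact mul_nonneg this hb
  have hinner : (0:ℝ) < n * (x + y + 1) * (x + y - 1) * a
      + (x ^ 2 - 2 * x + 2 - (y + 1) ^ 2) * b := by nlinarith [hgt, hq]
  have key : (0:ℝ) < 2 * x * n * (x + y + 1) ^ 2 * (x + y - 1) ^ 2
      * (n * (x + y + 1) * (x + y - 1) * a + (x ^ 2 - 2 * x + 2 - (y + 1) ^ 2) * b) := by
    positivity
  nlinarith [key]

/-- If `L² - 2L + 2 < (d+1)²` and `b > 0`, then the asymptotic MSE of
GS-shrinkage is strictly smaller than that of BeS-shrinkage when `a = 0`;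
conversely, if `a > (d+1)² b/(N(L+d-1)(L+d+1))`, the MSE of BeS-shrinkage is
strictly smaller. -/
theorem stmt_11 (L d N : ℕ) (hL : 0 < L) (hd : 0 < d) (hN : 0 < N)
    (a b : ℝ) (ha : 0 ≤ a) (hb : 0 ≤ b) :
    let MSEGSs : ℝ := (((d : ℝ) + 1) ^ 2 + L * ((d : ℝ) + 1)) / ((L : ℝ) + d + 1) ^ 2 * a
      + (L : ℝ) * ((d : ℝ) + 2) / (N * ((L : ℝ) + d + 1) ^ 2) * b
    let MSEBeSs : ℝ := (((d : ℝ) - 1) ^ 2 + L * ((d : ℝ) - 1)) / ((L : ℝ) + d - 1) ^ 2 * a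
      + (d : ℝ) * L / (N * ((L : ℝ) + d - 1) ^ 2) * b
    ((L : ℝ) ^ 2 - 2 * L + 2 < ((d : ℝ) + 1) ^ 2 → 0 < b → a = 0 → MSEGSs < MSEBeSs) ∧
      (((d : ℝ) + 1) ^ 2 * b / (N * ((L : ℝ) + d - 1) * ((L : ℝ) + d + 1)) < a
        → MSEBeSs < MSEGSs) := by
  have hx : (1:ℝ) ≤ L := by exact_mod_cast hL
  have hy : (1:ℝ) ≤ d := by exact_mod_cast hd
  have hn : (1:ℝ) ≤ N := by exact_mod_cast hN
  intro MSEGSs MSEBeSs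
  constructor
  · intro hlt hb0 ha0
    simp only [MSEGSs, MSEBeSs, ha0, mul_zero, zero_add]
    exact aux1 L d N b hx hy hn hlt hb0
  · intro hgt
    exact aux2 L d N a b hx hy hn hb hgt
end

section
/- Suppose F: ℝ^d → ℝ is differentiable and μ-smooth, bounded in absolute value by Δ, and stochastic gradient estimates g^t satisfy ‖E[g^t] - ∇F(θ^t)‖ ≤ B ‖∇F(θ^t)‖ and E[‖g^t - ∇F(θ^t)‖²] ≤ M at every iterate of the update θ^{t+1} = θ^t - η g^t run for T steps. If B < 1/2 and η = 1/(μ√T), then (1/T) Σ_{t=0}^{T-1} E[‖∇F(θ^t)‖²] ≤ (M + 4Δμ) / ((1 - 2B) √T). -/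
open MeasureTheory ProbabilityTheory

set_option maxHeartbeats 2000000

private lemma sgd_descent_lemma {d : ℕ} (F : EuclideanSpace ℝ (Fin d) → ℝ)
    (F' : EuclideanSpace ℝ (Fin d) → EuclideanSpace ℝ (Fin d))
    (hF : ∀ θ, HasGradientAt F (F' θ) θ) {μ : ℝ} (hμ : 0 ≤ μ)
    (hsmooth : ∀ θ₁ θ₂, ‖F' θ₁ - F' θ₂‖ ≤ μ * ‖θ₁ - θ₂‖)
    (x v : EuclideanSpace ℝ (Fin d)) :
    F (x + v) ≤ F x + (inner ℝ (F' x) v : ℝ) + μ / 2 * ‖v‖ ^ 2 := by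
  have hder : ∀ t : ℝ, HasDerivAt (fun t : ℝ => F (x + t • v))
      ((inner ℝ (F' (x + t • v)) v : ℝ)) t := by
    intro t
    have hc : HasDerivAt (fun t : ℝ => x + t • v) v t := by
      simpa using ((hasDerivAt_id t).smul_const v).const_add x
    have hg : HasFDerivAt F ((InnerProductSpace.toDual ℝ _) (F' (x + t • v))) (x + t • v) :=
      hasGradientAt_iff_hasFDerivAt.1 (hF _)
    have := hg.comp_hasDerivAt t hc
    simpa [InnerProductSpace.toDual_apply_apply, Function.comp_def] using this
  set φ : ℝ → ℝ := fun t => F (x + t • v) - t * (inner ℝ (F' x) v : ℝ)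
      - μ / 2 * t ^ 2 * ‖v‖ ^ 2 with hφ
  have hφd : ∀ t : ℝ, HasDerivAt φ
      ((inner ℝ (F' (x + t • v)) v : ℝ) - (inner ℝ (F' x) v : ℝ) - μ * t * ‖v‖ ^ 2) t := by
    intro t
    have h1 : HasDerivAt (fun t : ℝ => t * (inner ℝ (F' x) v : ℝ)) (inner ℝ (F' x) v : ℝ) t := by
      simpa using (hasDerivAt_id t).mul_const (inner ℝ (F' x) v : ℝ)
    have h2 : HasDerivAt (fun t : ℝ => μ / 2 * t ^ 2 * ‖v‖ ^ 2) (μ * t * ‖v‖ ^ 2) t := by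
      have := ((hasDerivAt_pow 2 t).const_mul (μ / 2)).mul_const (‖v‖ ^ 2)
      exact this.congr_deriv (by rw [show (2:ℕ) - 1 = 1 from rfl]; ring)
    exact ((hder t).sub h1).sub h2
  have hanti : AntitoneOn φ (Set.Icc (0 : ℝ) 1) := by
    apply antitoneOn_of_deriv_nonpos (convex_Icc 0 1)
    · exact fun t _ => (hφd t).continuousAt.continuousWithinAt
    · exact fun t _ => ((hφd t).differentiableAt).differentiableWithinAt
    · intro t ht
      rw [interior_Icc] at ht
      rw [(hφd t).deriv]
      have h4 : (inner ℝ (F' (x + t • v)) v : ℝ) - (inner ℝ (F' x) v : ℝ)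
          = (inner ℝ (F' (x + t • v) - F' x) v : ℝ) := by rw [inner_sub_left]
      have h5 : (inner ℝ (F' (x + t • v) - F' x) v : ℝ) ≤ μ * t * ‖v‖ ^ 2 := by
        calc (inner ℝ (F' (x + t • v) - F' x) v : ℝ) ≤ ‖F' (x + t • v) - F' x‖ * ‖v‖ :=
              real_inner_le_norm _ _
          _ ≤ (μ * ‖(x + t • v) - x‖) * ‖v‖ :=
              mul_le_mul_of_nonneg_right (hsmooth _ _) (norm_nonneg v)
          _ = μ * t * ‖v‖ ^ 2 := by
              rw [add_sub_cancel_left, norm_smul, Real.norm_eq_abs, abs_of_pos ht.1]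
              ring
      linarith [h4 ▸ h5]
  have h01 := hanti (Set.left_mem_Icc.2 zero_le_one) (Set.right_mem_Icc.2 zero_le_one) zero_le_one
  simp only [hφ, zero_smul, one_smul, add_zero, zero_mul, zero_pow, mul_zero, sub_zero,
    one_mul, one_pow, mul_one] at h01
  linarith [h01]

private lemma sgd_integrable_mul_of_L2 {α : Type*} {m0 : MeasurableSpace α} {ν : Measure α}
    {f g : α → ℝ} (hf : MemLp f 2 ν) (hg : MemLp g 2 ν) :
    Integrable (fun ω => f ω * g ω) ν := by
  refine Integrable.mono' ((hf.integrable_sq.add hg.integrable_sq).const_mul (1 / 2))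
    (hf.aestronglyMeasurable.mul hg.aestronglyMeasurable) ?_
  filter_upwards with ω
  simp only [Pi.add_apply]
  rw [Real.norm_eq_abs, abs_mul]
  nlinarith [sq_nonneg (|f ω| - |g ω|), sq_abs (f ω), sq_abs (g ω), abs_nonneg (f ω),
    abs_nonneg (g ω)]

private lemma sgd_integrable_inner_of_L2 {α : Type*} {m0 : MeasurableSpace α} {ν : Measure α}
    {E : Type*} [NormedAddCommGroup E] [InnerProductSpace ℝ E]
    {f g : α → E} (hf : MemLp f 2 ν) (hg : MemLp g 2 ν) :
    Integrable (fun ω => (inner ℝ (f ω) (g ω) : ℝ)) ν := by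
  refine Integrable.mono'
    ((hf.norm.integrable_sq.add hg.norm.integrable_sq).const_mul (1 / 2))
    (hf.aestronglyMeasurable.inner hg.aestronglyMeasurable) ?_
  filter_upwards with ω
  simp only [Pi.add_apply]
  rw [Real.norm_eq_abs]
  have h1 := abs_real_inner_le_norm (f ω) (g ω)
  nlinarith [sq_nonneg (‖f ω‖ - ‖g ω‖), norm_nonneg (f ω), norm_nonneg (g ω)]

private lemma sgd_condexp_coord {α : Type*} {m m0 : MeasurableSpace α}
    {ν : @MeasureTheory.Measure α m0} [IsFiniteMeasure ν] (hm : m ≤ m0) {d : ℕ}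
    {f : α → EuclideanSpace ℝ (Fin d)} (hf : Integrable f ν) (i : Fin d) :
    (fun ω => MeasureTheory.condExp m ν f ω i) =ᵐ[ν]
      MeasureTheory.condExp m ν (fun ω => f ω i) := by
  refine ae_eq_condExp_of_forall_setIntegral_eq hm
    ((EuclideanSpace.proj i (𝕜 := ℝ)).integrable_comp hf)
    (fun s _ _ => ((EuclideanSpace.proj i (𝕜 := ℝ)).integrable_comp integrable_condExp).integrableOn)
    (fun s hs hνs => ?_) ?_
  · calc ∫ ω in s, MeasureTheory.condExp m ν f ω i ∂ν
        = (EuclideanSpace.proj i (𝕜 := ℝ)) (∫ ω in s, MeasureTheory.condExp m ν f ω ∂ν) :=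
          (EuclideanSpace.proj i (𝕜 := ℝ)).integral_comp_comm integrable_condExp.integrableOn
      _ = (EuclideanSpace.proj i (𝕜 := ℝ)) (∫ ω in s, f ω ∂ν) := by
          rw [setIntegral_condExp hm hf hs]
      _ = ∫ ω in s, f ω i ∂ν :=
          ((EuclideanSpace.proj i (𝕜 := ℝ)).integral_comp_comm hf.integrableOn).symm
  · exact ((EuclideanSpace.proj i (𝕜 := ℝ)).continuous.comp_stronglyMeasurable
      stronglyMeasurable_condExp).aestronglyMeasurable

private lemma sgd_integral_inner_condexp {α : Type*} {m m0 : MeasurableSpace α}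
    {ν : @MeasureTheory.Measure α m0} [IsFiniteMeasure ν] (hm : m ≤ m0) {d : ℕ}
    {c f : α → EuclideanSpace ℝ (Fin d)}
    (hcm : StronglyMeasurable[m] c) (hcL2 : MemLp c 2 ν) (hfL2 : MemLp f 2 ν) :
    ∫ ω, (inner ℝ (c ω) (f ω) : ℝ) ∂ν
      = ∫ ω, (inner ℝ (c ω) (MeasureTheory.condExp m ν f ω) : ℝ) ∂ν := by
  have hfint : Integrable f ν := hfL2.integrable one_le_two
  have hci : ∀ i : Fin d, MemLp (fun ω => c ω i) 2 ν := fun i =>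
    (EuclideanSpace.proj i (𝕜 := ℝ)).comp_memLp' hcL2
  have hfi : ∀ i : Fin d, MemLp (fun ω => f ω i) 2 ν := fun i =>
    (EuclideanSpace.proj i (𝕜 := ℝ)).comp_memLp' hfL2
  have h1 : ∀ i : Fin d, Integrable (fun ω => c ω i * f ω i) ν := fun i =>
    sgd_integrable_mul_of_L2 (hci i) (hfi i)
  have hpull : ∀ i : Fin d,
      MeasureTheory.condExp m ν (fun ω => c ω i * f ω i)
        =ᵐ[ν] fun ω => c ω i * MeasureTheory.condExp m ν (fun ω' => f ω' i) ω := by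
    intro i
    exact condExp_mul_of_stronglyMeasurable_left
      ((EuclideanSpace.proj i (𝕜 := ℝ)).continuous.comp_stronglyMeasurable hcm)
      (h1 i) ((EuclideanSpace.proj i (𝕜 := ℝ)).integrable_comp hfint)
  have h2eq : ∀ i : Fin d,
      (fun ω => c ω i * MeasureTheory.condExp m ν f ω i)
        =ᵐ[ν] MeasureTheory.condExp m ν (fun ω => c ω i * f ω i) := by
    intro i
    filter_upwards [hpull i, sgd_condexp_coord hm hfint i] with ω hp hcrd
    rw [hcrd, ← hp]
  have h2 : ∀ i : Fin d, Integrable (fun ω => c ω i * MeasureTheory.condExp m ν f ω i) ν :=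
    fun i => integrable_condExp.congr (h2eq i).symm
  have heq : ∀ i : Fin d,
      ∫ ω, c ω i * f ω i ∂ν = ∫ ω, c ω i * MeasureTheory.condExp m ν f ω i ∂ν := by
    intro i
    rw [integral_congr_ae (h2eq i), integral_condExp hm]
  have expand : ∀ (u w : EuclideanSpace ℝ (Fin d)), (inner ℝ u w : ℝ) = ∑ i, u i * w i := by
    intro u w
    simp [PiLp.inner_apply, RCLike.inner_apply, conj_trivial]
    exact Finset.sum_congr rfl (fun i _ => mul_comm _ _)
  calc ∫ ω, (inner ℝ (c ω) (f ω) : ℝ) ∂ν = ∫ ω, ∑ i, c ω i * f ω i ∂ν := by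
        simp only [expand]
    _ = ∑ i, ∫ ω, c ω i * f ω i ∂ν := integral_finset_sum _ (fun i _ => h1 i)
    _ = ∑ i, ∫ ω, c ω i * MeasureTheory.condExp m ν f ω i ∂ν :=
        Finset.sum_congr rfl (fun i _ => heq i)
    _ = ∫ ω, ∑ i, c ω i * MeasureTheory.condExp m ν f ω i ∂ν :=
        (integral_finset_sum _ (fun i _ => h2 i)).symm
    _ = ∫ ω, (inner ℝ (c ω) (MeasureTheory.condExp m ν f ω) : ℝ) ∂ν := by
        simp only [expand]

/-- Convergence of SGD with biased gradient estimates: if `F` is differentiable,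
`μ`-smooth and bounded by `Δ`, the gradient estimates `gᵗ` satisfy (conditionally
on the past, encoded by the filtration `ℱ`) `‖E[gᵗ|ℱ t] - ∇F(θᵗ)‖ ≤ B‖∇F(θᵗ)‖`
and `E[‖gᵗ - ∇F(θᵗ)‖²|ℱ t] ≤ M`, the iterates follow `θᵗ⁺¹ = θᵗ - ηgᵗ` for `T`
steps with `B < 1/2` and `η = 1/(μ√T)`, then
`(1/T)∑ₜ E‖∇F(θᵗ)‖² ≤ (M + 4Δμ)/((1-2B)√T)`. -/
theorem stmt_12 {Ω : Type*} [MeasureSpace Ω] [IsProbabilityMeasure (ℙ : Measure Ω)]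
    {d : ℕ} (F : EuclideanSpace ℝ (Fin d) → ℝ)
    (F' : EuclideanSpace ℝ (Fin d) → EuclideanSpace ℝ (Fin d))
    (hF : ∀ θ, HasGradientAt F (F' θ) θ)
    (μ Δ B M : ℝ) (hμ : 0 < μ) (hB0 : 0 ≤ B) (hB : B < 1 / 2) (hM : 0 ≤ M)
    (hsmooth : ∀ θ₁ θ₂, ‖F' θ₁ - F' θ₂‖ ≤ μ * ‖θ₁ - θ₂‖)
    (hbound : ∀ θ, |F θ| ≤ Δ)
    (T : ℕ) (hT : 0 < T) (η : ℝ) (hη : η = 1 / (μ * Real.sqrt T))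
    (ℱ : ℕ → MeasurableSpace Ω) (hℱle : ∀ t, ℱ t ≤ (inferInstance : MeasurableSpace Ω))
    (hℱmono : Monotone ℱ)
    (θ : ℕ → Ω → EuclideanSpace ℝ (Fin d)) (g : ℕ → Ω → EuclideanSpace ℝ (Fin d))
    (hadapt : ∀ t, Measurable[ℱ t] (θ t))
    (hupdate : ∀ t ω, θ (t + 1) ω = θ t ω - η • g t ω)
    (hgint : ∀ t, MemLp (g t) 2 ℙ)
    (hFθint : ∀ t, Integrable (fun ω => F (θ t ω)) ℙ)
    (hgradint : ∀ t, MemLp (fun ω => F' (θ t ω)) 2 ℙ)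
    (hbias : ∀ t, ∀ᵐ ω ∂ℙ,
      ‖MeasureTheory.condExp (ℱ t) ℙ (g t) ω - F' (θ t ω)‖ ≤ B * ‖F' (θ t ω)‖)
    (hmse : ∀ t, ∀ᵐ ω ∂ℙ,
      MeasureTheory.condExp (ℱ t) ℙ (fun ω' => ‖g t ω' - F' (θ t ω')‖ ^ 2) ω ≤ M) :
    (1 / (T : ℝ)) * ∑ t ∈ Finset.range T, ∫ ω, ‖F' (θ t ω)‖ ^ 2
      ≤ (M + 4 * Δ * μ) / ((1 - 2 * B) * Real.sqrt T) := by
  have hF'cont : Continuous F' := by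
    have hlip : LipschitzWith (Real.toNNReal μ) F' := by
      apply LipschitzWith.of_dist_le_mul
      intro a b
      rw [dist_eq_norm, dist_eq_norm, Real.coe_toNNReal μ hμ.le]
      exact hsmooth a b
    exact hlip.continuous
  have hΔ : 0 ≤ Δ := le_trans (abs_nonneg _) (hbound 0)
  have hT1 : (1 : ℝ) ≤ (T : ℝ) := by exact_mod_cast hT
  have hs1 : (1 : ℝ) ≤ Real.sqrt T := by
    have := Real.sqrt_le_sqrt hT1
    rwa [Real.sqrt_one] at this
  have hspos : (0 : ℝ) < Real.sqrt T := lt_of_lt_of_le one_pos hs1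
  have hηpos : 0 < η := by rw [hη]; positivity
  have hμη : μ * η = 1 / Real.sqrt T := by
    rw [hη]; field_simp
  have hμη1 : μ * η ≤ 1 := by
    rw [hμη, div_le_one hspos]; exact hs1
  have h1B : (0 : ℝ) < 1 - 2 * B := by linarith
  -- the key per-step estimate
  have step : ∀ t, η * (1 - 2 * B) / 2 * ∫ ω, ‖F' (θ t ω)‖ ^ 2
      ≤ (∫ ω, F (θ t ω)) - (∫ ω, F (θ (t + 1) ω)) + μ * η ^ 2 / 2 * M := by
    intro t
    have hm := hℱle t
    have hcsm : StronglyMeasurable[ℱ t] (fun ω => F' (θ t ω)) :=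
      (hF'cont.measurable.comp (hadapt t)).stronglyMeasurable
    have hcL2 : MemLp (fun ω => F' (θ t ω)) 2 ℙ := hgradint t
    have hGL2 : MemLp (g t) 2 ℙ := hgint t
    have hdL2 : MemLp (fun ω => g t ω - F' (θ t ω)) 2 ℙ := hGL2.sub hcL2
    have iZ : Integrable (fun ω => ‖F' (θ t ω)‖ ^ 2) ℙ := hcL2.norm.integrable_sq
    have iY : Integrable (fun ω => ‖g t ω - F' (θ t ω)‖ ^ 2) ℙ := hdL2.norm.integrable_sq
    have iC : Integrable (fun ω => (inner ℝ (g t ω - F' (θ t ω)) (F' (θ t ω)) : ℝ)) ℙ :=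
      sgd_integrable_inner_of_L2 hdL2 hcL2
    have iX : Integrable (fun ω => (inner ℝ (F' (θ t ω)) (g t ω) : ℝ)) ℙ :=
      sgd_integrable_inner_of_L2 hcL2 hGL2
    have hZnn : 0 ≤ ∫ ω, ‖F' (θ t ω)‖ ^ 2 := integral_nonneg (fun ω => sq_nonneg _)
    -- MSE bound
    have hYle : ∫ ω, ‖g t ω - F' (θ t ω)‖ ^ 2 ≤ M := by
      calc ∫ ω, ‖g t ω - F' (θ t ω)‖ ^ 2
          = ∫ ω, MeasureTheory.condExp (ℱ t) ℙ (fun ω' => ‖g t ω' - F' (θ t ω')‖ ^ 2) ω :=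
            (integral_condExp hm).symm
        _ ≤ ∫ _ω, M ∂ℙ := integral_mono_ae integrable_condExp (integrable_const M) (hmse t)
        _ = M := by simp
    -- bias bound
    have hA : ∫ ω, (inner ℝ (F' (θ t ω)) (g t ω) : ℝ)
        = ∫ ω, (inner ℝ (F' (θ t ω)) (MeasureTheory.condExp (ℱ t) ℙ (g t) ω) : ℝ) :=
      sgd_integral_inner_condexp hm hcsm hcL2 hGL2
    have hhsm : AEStronglyMeasurable (fun ω => MeasureTheory.condExp (ℱ t) ℙ (g t) ω) ℙ :=
      (stronglyMeasurable_condExp.mono hm).aestronglyMeasurable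
    have ihc : Integrable
        (fun ω => (inner ℝ (F' (θ t ω)) (MeasureTheory.condExp (ℱ t) ℙ (g t) ω) : ℝ)) ℙ := by
      refine Integrable.mono' (iZ.const_mul (B + 1))
        (hcL2.aestronglyMeasurable.inner hhsm) ?_
      filter_upwards [hbias t] with ω hb
      rw [Real.norm_eq_abs]
      have h5 : ‖MeasureTheory.condExp (ℱ t) ℙ (g t) ω‖ ≤ (B + 1) * ‖F' (θ t ω)‖ := by
        have h6 := norm_add_le (MeasureTheory.condExp (ℱ t) ℙ (g t) ω - F' (θ t ω)) (F' (θ t ω))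
        rw [sub_add_cancel] at h6
        linarith
      have h7 := abs_real_inner_le_norm (F' (θ t ω)) (MeasureTheory.condExp (ℱ t) ℙ (g t) ω)
      nlinarith [norm_nonneg (F' (θ t ω)), norm_nonneg (MeasureTheory.condExp (ℱ t) ℙ (g t) ω)]
    have hCb : -(B * ∫ ω, ‖F' (θ t ω)‖ ^ 2)
        ≤ ∫ ω, (inner ℝ (g t ω - F' (θ t ω)) (F' (θ t ω)) : ℝ) := by
      have e : ∀ ω, (inner ℝ (g t ω - F' (θ t ω)) (F' (θ t ω)) : ℝ)
          = (inner ℝ (F' (θ t ω)) (g t ω) : ℝ) - ‖F' (θ t ω)‖ ^ 2 := by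
        intro ω
        rw [inner_sub_left, real_inner_comm, real_inner_self_eq_norm_sq]
      calc -(B * ∫ ω, ‖F' (θ t ω)‖ ^ 2) = ∫ ω, -(B * ‖F' (θ t ω)‖ ^ 2) := by
            rw [integral_neg, integral_const_mul]
        _ ≤ ∫ ω, ((inner ℝ (F' (θ t ω)) (MeasureTheory.condExp (ℱ t) ℙ (g t) ω) : ℝ)
              - ‖F' (θ t ω)‖ ^ 2) := by
            refine integral_mono_ae ((iZ.const_mul B).neg) (ihc.sub iZ) ?_
            filter_upwards [hbias t] with ω hb
            have h6 : (inner ℝ (F' (θ t ω)) (MeasureTheory.condExp (ℱ t) ℙ (g t) ω) : ℝ)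
                - ‖F' (θ t ω)‖ ^ 2
                = (inner ℝ (F' (θ t ω)) (MeasureTheory.condExp (ℱ t) ℙ (g t) ω - F' (θ t ω)) : ℝ) := by
              rw [inner_sub_right, real_inner_self_eq_norm_sq]
            rw [h6]
            have h7 := abs_real_inner_le_norm (F' (θ t ω))
              (MeasureTheory.condExp (ℱ t) ℙ (g t) ω - F' (θ t ω))
            have h8 := neg_abs_le
              (inner ℝ (F' (θ t ω)) (MeasureTheory.condExp (ℱ t) ℙ (g t) ω - F' (θ t ω)) : ℝ)
            nlinarith [norm_nonneg (F' (θ t ω)),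
              mul_le_mul_of_nonneg_left hb (norm_nonneg (F' (θ t ω)))]
        _ = (∫ ω, (inner ℝ (F' (θ t ω)) (MeasureTheory.condExp (ℱ t) ℙ (g t) ω) : ℝ))
              - ∫ ω, ‖F' (θ t ω)‖ ^ 2 := integral_sub ihc iZ
        _ = (∫ ω, (inner ℝ (F' (θ t ω)) (g t ω) : ℝ)) - ∫ ω, ‖F' (θ t ω)‖ ^ 2 := by rw [hA]
        _ = ∫ ω, ((inner ℝ (F' (θ t ω)) (g t ω) : ℝ) - ‖F' (θ t ω)‖ ^ 2) :=
            (integral_sub iX iZ).symm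
        _ = ∫ ω, (inner ℝ (g t ω - F' (θ t ω)) (F' (θ t ω)) : ℝ) :=
            integral_congr_ae (Filter.Eventually.of_forall (fun ω => (e ω).symm))
    -- pointwise descent
    have hpt : ∀ ω, F (θ (t + 1) ω) ≤ F (θ t ω) + ((μ * η ^ 2 / 2 - η) * ‖F' (θ t ω)‖ ^ 2
        + ((μ * η ^ 2 - η) * (inner ℝ (g t ω - F' (θ t ω)) (F' (θ t ω)) : ℝ)
          + μ * η ^ 2 / 2 * ‖g t ω - F' (θ t ω)‖ ^ 2)) := by
      intro ω
      have hdes := sgd_descent_lemma F F' hF hμ.le hsmooth (θ t ω) (-(η • g t ω))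
      rw [show θ t ω + -(η • g t ω) = θ t ω - η • g t ω from (sub_eq_add_neg _ _).symm] at hdes
      rw [hupdate t ω]
      have e1 : (inner ℝ (F' (θ t ω)) (-(η • g t ω)) : ℝ)
          = -η * (inner ℝ (F' (θ t ω)) (g t ω) : ℝ) := by
        rw [inner_neg_right, real_inner_smul_right]; ring
      have e2 : ‖-(η • g t ω)‖ ^ 2 = η ^ 2 * ‖g t ω‖ ^ 2 := by
        rw [norm_neg, norm_smul, Real.norm_eq_abs, mul_pow, sq_abs]
      have e3 : ‖g t ω‖ ^ 2 = ‖g t ω - F' (θ t ω)‖ ^ 2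
          + 2 * (inner ℝ (g t ω - F' (θ t ω)) (F' (θ t ω)) : ℝ) + ‖F' (θ t ω)‖ ^ 2 := by
        have h7 := norm_add_sq_real (g t ω - F' (θ t ω)) (F' (θ t ω))
        rw [sub_add_cancel] at h7
        linarith
      have e4 : (inner ℝ (F' (θ t ω)) (g t ω) : ℝ)
          = ‖F' (θ t ω)‖ ^ 2 + (inner ℝ (g t ω - F' (θ t ω)) (F' (θ t ω)) : ℝ) := by
        have h8 : (inner ℝ (g t ω - F' (θ t ω)) (F' (θ t ω)) : ℝ)
            = (inner ℝ (F' (θ t ω)) (g t ω) : ℝ) - ‖F' (θ t ω)‖ ^ 2 := by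
          rw [inner_sub_left, real_inner_comm, real_inner_self_eq_norm_sq]
        linarith
      rw [e1, e2, e3, e4] at hdes
      ring_nf at hdes ⊢
      linarith [hdes]
    -- integrate the pointwise descent
    have i1 : Integrable (fun ω => (μ * η ^ 2 / 2 - η) * ‖F' (θ t ω)‖ ^ 2) ℙ :=
      iZ.const_mul _
    have i2 : Integrable (fun ω =>
        (μ * η ^ 2 - η) * (inner ℝ (g t ω - F' (θ t ω)) (F' (θ t ω)) : ℝ)) ℙ :=
      iC.const_mul _
    have i3 : Integrable (fun ω => μ * η ^ 2 / 2 * ‖g t ω - F' (θ t ω)‖ ^ 2) ℙ :=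
      iY.const_mul _
    have i23 : Integrable (fun ω =>
        (μ * η ^ 2 - η) * (inner ℝ (g t ω - F' (θ t ω)) (F' (θ t ω)) : ℝ)
          + μ * η ^ 2 / 2 * ‖g t ω - F' (θ t ω)‖ ^ 2) ℙ := i2.add i3
    have i123 : Integrable (fun ω => (μ * η ^ 2 / 2 - η) * ‖F' (θ t ω)‖ ^ 2
        + ((μ * η ^ 2 - η) * (inner ℝ (g t ω - F' (θ t ω)) (F' (θ t ω)) : ℝ)
          + μ * η ^ 2 / 2 * ‖g t ω - F' (θ t ω)‖ ^ 2)) ℙ := i1.add i23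
    have hRint : Integrable (fun ω => F (θ t ω) + ((μ * η ^ 2 / 2 - η) * ‖F' (θ t ω)‖ ^ 2
        + ((μ * η ^ 2 - η) * (inner ℝ (g t ω - F' (θ t ω)) (F' (θ t ω)) : ℝ)
          + μ * η ^ 2 / 2 * ‖g t ω - F' (θ t ω)‖ ^ 2))) ℙ :=
      (hFθint t).add i123
    have hInt : ∫ ω, F (θ (t + 1) ω) ≤ (∫ ω, F (θ t ω))
        + ((μ * η ^ 2 / 2 - η) * (∫ ω, ‖F' (θ t ω)‖ ^ 2)
        + ((μ * η ^ 2 - η) * (∫ ω, (inner ℝ (g t ω - F' (θ t ω)) (F' (θ t ω)) : ℝ))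
          + μ * η ^ 2 / 2 * (∫ ω, ‖g t ω - F' (θ t ω)‖ ^ 2))) := by
      calc ∫ ω, F (θ (t + 1) ω) ≤ ∫ ω, (F (θ t ω) + ((μ * η ^ 2 / 2 - η) * ‖F' (θ t ω)‖ ^ 2
          + ((μ * η ^ 2 - η) * (inner ℝ (g t ω - F' (θ t ω)) (F' (θ t ω)) : ℝ)
            + μ * η ^ 2 / 2 * ‖g t ω - F' (θ t ω)‖ ^ 2))) :=
            integral_mono (hFθint (t + 1)) hRint hpt
        _ = (∫ ω, F (θ t ω)) + ((μ * η ^ 2 / 2 - η) * (∫ ω, ‖F' (θ t ω)‖ ^ 2)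
            + ((μ * η ^ 2 - η) * (∫ ω, (inner ℝ (g t ω - F' (θ t ω)) (F' (θ t ω)) : ℝ))
              + μ * η ^ 2 / 2 * (∫ ω, ‖g t ω - F' (θ t ω)‖ ^ 2))) := by
            rw [integral_add (hFθint t) i123, integral_add i1 i23, integral_add i2 i3,
              integral_const_mul, integral_const_mul, integral_const_mul]
    have hmul1 : (μ * η ^ 2 - η) * (∫ ω, (inner ℝ (g t ω - F' (θ t ω)) (F' (θ t ω)) : ℝ))
        ≤ (μ * η ^ 2 - η) * (-(B * ∫ ω, ‖F' (θ t ω)‖ ^ 2)) := by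
      apply mul_le_mul_of_nonpos_left hCb
      nlinarith [hηpos, hμη1]
    have hmul2 : μ * η ^ 2 / 2 * (∫ ω, ‖g t ω - F' (θ t ω)‖ ^ 2) ≤ μ * η ^ 2 / 2 * M := by
      apply mul_le_mul_of_nonneg_left hYle
      positivity
    nlinarith [hInt, hmul1, hmul2, hZnn,
      mul_nonneg (mul_nonneg (mul_nonneg hμ.le (sq_nonneg η)) hB0) hZnn,
      mul_nonneg (mul_nonneg hηpos.le (sub_nonneg.2 hμη1)) hZnn]
  -- bound on |∫ F (θ n)|
  have habs : ∀ n, |∫ ω, F (θ n ω)| ≤ Δ := by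
    intro n
    calc |∫ ω, F (θ n ω)| ≤ ∫ ω, |F (θ n ω)| := by
          simpa [Real.norm_eq_abs] using norm_integral_le_integral_norm (fun ω => F (θ n ω))
      _ ≤ ∫ _ω, Δ ∂ℙ := integral_mono (hFθint n).abs (integrable_const Δ)
          (fun ω => hbound _)
      _ = Δ := by simp
  -- sum the per-step estimates
  have hsum : η * (1 - 2 * B) / 2 * ∑ t ∈ Finset.range T, ∫ ω, ‖F' (θ t ω)‖ ^ 2
      ≤ 2 * Δ + (T : ℝ) * (μ * η ^ 2 / 2 * M) := by
    rw [Finset.mul_sum]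
    calc ∑ t ∈ Finset.range T, η * (1 - 2 * B) / 2 * ∫ ω, ‖F' (θ t ω)‖ ^ 2
        ≤ ∑ t ∈ Finset.range T, ((∫ ω, F (θ t ω)) - (∫ ω, F (θ (t + 1) ω))
            + μ * η ^ 2 / 2 * M) := Finset.sum_le_sum (fun t _ => step t)
      _ = (∫ ω, F (θ 0 ω)) - (∫ ω, F (θ T ω)) + (T : ℝ) * (μ * η ^ 2 / 2 * M) := by
          rw [Finset.sum_add_distrib, Finset.sum_range_sub' (fun n => ∫ ω, F (θ n ω)),
            Finset.sum_const, Finset.card_range, nsmul_eq_mul]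
      _ ≤ 2 * Δ + (T : ℝ) * (μ * η ^ 2 / 2 * M) := by
          have h0 := abs_le.1 (habs 0)
          have hTb := abs_le.1 (habs T)
          linarith [h0.2, hTb.1]
  -- final arithmetic
  set S := ∑ t ∈ Finset.range T, ∫ ω, ‖F' (θ t ω)‖ ^ 2 with hS
  have hSnn : 0 ≤ S := Finset.sum_nonneg (fun t _ => integral_nonneg (fun ω => sq_nonneg _))
  have hη' : η * (μ * Real.sqrt T) = 1 := by
    rw [hη]; field_simp
  have hT2 : (T : ℝ) = Real.sqrt T ^ 2 := (Real.sq_sqrt (Nat.cast_nonneg T)).symm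
  have key2 : (1 - 2 * B) * Real.sqrt T * S ≤ (M + 4 * Δ * μ) * T := by
    have h2 := mul_le_mul_of_nonneg_left hsum
      (le_of_lt (show (0 : ℝ) < 2 * μ * Real.sqrt T ^ 2 by positivity))
    have e5 : 2 * μ * Real.sqrt T ^ 2 * (η * (1 - 2 * B) / 2 * S)
        = (η * (μ * Real.sqrt T)) * ((1 - 2 * B) * Real.sqrt T * S) := by ring
    have e6 : 2 * μ * Real.sqrt T ^ 2 * (2 * Δ + (T : ℝ) * (μ * η ^ 2 / 2 * M))
        = 4 * Δ * μ * Real.sqrt T ^ 2 + (T : ℝ) * ((η * (μ * Real.sqrt T)) ^ 2 * M) := by ring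
    rw [e5, e6, hη'] at h2
    rw [← hT2] at h2
    nlinarith [h2]
  have hTpos : (0 : ℝ) < (T : ℝ) := by positivity
  rw [one_div, inv_mul_eq_div, div_le_div_iff₀ hTpos (by positivity)]
  nlinarith [key2]
end
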